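/- For m ≥ 2, the function f(x) = c₂(m)·(‖x‖^m·log²(e/‖x‖))^{−1} on the open unit ball of ℝ^m (and 0 elsewhere), with c₂(m) = Γ(m/2)/(2π^{m/2}), is a probability density whose differential entropy is −∞. -/

import Mathlib

open Real MeasureTheory Set Metric
open scoped ENNReal

private lemma lintegral_fun_norm_addHaar' {E : Type*} [NormedAddCommGroup E] [NormedSpace ℝ E]
    [MeasurableSpace E] [BorelSpace E] [Nontrivial E] [FiniteDimensional ℝ E]
    (μ : Measure E) [μ.IsAddHaarMeasure] (g : ℝ → ℝ≥0∞) (hg : Measurable g) :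
    ∫⁻ x, g ‖x‖ ∂μ = (Module.finrank ℝ E : ℝ≥0∞) * μ (ball 0 1) *
      ∫⁻ y in Ioi (0 : ℝ), ENNReal.ofReal (y ^ (Module.finrank ℝ E - 1)) * g y := by
  have hmeas : Measurable (fun p : ↑(sphere (0:E) 1) × ↑(Ioi (0:ℝ)) => g ↑p.2) :=
    hg.comp (measurable_subtype_coe.comp measurable_snd)
  have hgs : Measurable (fun y : ↑(Ioi (0:ℝ)) => g ↑y) := hg.comp measurable_subtype_coe
  rw [← Measure.toSphere_apply_univ]
  calc ∫⁻ x, g ‖x‖ ∂μ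
      = ∫⁻ x in ({0}ᶜ : Set E), g ‖x‖ ∂μ := by rw [restrict_compl_singleton]
    _ = ∫⁻ x : ({0}ᶜ : Set E), g ‖x.1‖ ∂(μ.comap (↑)) :=
        (lintegral_subtype_comap (measurableSet_singleton _).compl _).symm
    _ = ∫⁻ p : sphere (0:E) 1 × Ioi (0:ℝ), g p.2
          ∂(μ.toSphere.prod (.volumeIoiPow (Module.finrank ℝ E - 1))) := by
        simpa [homeomorphUnitSphereProd_apply_snd_coe] using
        μ.measurePreserving_homeomorphUnitSphereProd.lintegral_comp_emb
          (Homeomorph.measurableEmbedding _) (fun p => g p.2)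
    _ = μ.toSphere univ * ∫⁻ y : Ioi (0:ℝ), g y ∂(.volumeIoiPow (Module.finrank ℝ E - 1)) := by
        rw [lintegral_prod _ hmeas.aemeasurable]
        simp [lintegral_const, mul_comm]
    _ = μ.toSphere univ * ∫⁻ y in Ioi (0:ℝ), ENNReal.ofReal (y ^ (Module.finrank ℝ E - 1)) * g y := by
        rw [Measure.volumeIoiPow,
          lintegral_withDensity_eq_lintegral_mul _
            ((measurable_subtype_coe.pow_const _).ennreal_ofReal) hgs]
        congr 1
        rw [← lintegral_subtype_comap (μ := (volume : Measure ℝ)) (s := Ioi (0:ℝ))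
          measurableSet_Ioi
          (fun y : ℝ => ENNReal.ofReal (y ^ (Module.finrank ℝ E - 1)) * g y)]
        rfl

private lemma one_sub_log_pos {y : ℝ} (hy0 : 0 < y) (hy1 : y ≤ 1) : 0 < 1 - Real.log y := by
  have := Real.log_nonpos hy0.le hy1
  linarith

private lemma contOn_aux {a b : ℝ} (ha : 0 < a) (hb : b ≤ 1) (k : ℕ) :
    ContinuousOn (fun y : ℝ => (y * (1 - Real.log y) ^ k)⁻¹) (Icc a b) := by
  apply ContinuousOn.inv₀
  · have hlog : ContinuousOn (fun y : ℝ => 1 - Real.log y) (Icc a b) :=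
      continuousOn_const.sub (Real.continuousOn_log.mono fun y hy =>
        mem_compl_singleton_iff.mpr (ne_of_gt (ha.trans_le hy.1)))
    exact continuousOn_id.mul (hlog.pow k)
  · intro y hy
    have hy0 : 0 < y := lt_of_lt_of_le ha hy.1
    have h1 : 0 < 1 - Real.log y := one_sub_log_pos hy0 (hy.2.trans hb)
    positivity

private lemma deriv_aux1 {y : ℝ} (hy0 : 0 < y) (hy1 : (1:ℝ) - Real.log y ≠ 0) :
    HasDerivAt (fun z : ℝ => (1 - Real.log z)⁻¹) ((y * (1 - Real.log y) ^ 2)⁻¹) y := by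
  have h := ((Real.hasDerivAt_log (ne_of_gt hy0)).const_sub 1).inv hy1
  refine h.congr_deriv ?_
  field_simp

private lemma deriv_aux2 {y : ℝ} (hy0 : 0 < y) (hy1 : (0:ℝ) < 1 - Real.log y) :
    HasDerivAt (fun z : ℝ => -Real.log (1 - Real.log z)) ((y * (1 - Real.log y) ^ 1)⁻¹) y := by
  have h := (((Real.hasDerivAt_log (ne_of_gt hy0)).const_sub 1).log (ne_of_gt hy1)).neg
  refine h.congr_deriv ?_
  field_simp

private lemma lint_Ioo {a b : ℝ} (ha : 0 < a) (hab : a ≤ b) (hb : b ≤ 1) (k : ℕ) (F : ℝ → ℝ)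
    (hF : ∀ y ∈ Icc a b, HasDerivAt F ((y * (1 - Real.log y) ^ k)⁻¹) y) :
    ∫⁻ y in Ioo a b, ENNReal.ofReal ((y * (1 - Real.log y) ^ k)⁻¹) = ENNReal.ofReal (F b - F a) := by
  have hcont := contOn_aux ha hb k
  have hint : IntegrableOn (fun y : ℝ => (y * (1 - Real.log y) ^ k)⁻¹) (Ioo a b) :=
    (hcont.integrableOn_Icc).mono_set Ioo_subset_Icc_self
  have hval : ∫ y in Ioo a b, (y * (1 - Real.log y) ^ k)⁻¹ = F b - F a := by
    rw [← integral_Ioc_eq_integral_Ioo, ← intervalIntegral.integral_of_le hab]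
    exact intervalIntegral.integral_eq_sub_of_hasDerivAt
      (fun y hy => hF y (by rwa [uIcc_of_le hab] at hy))
      ((hcont.mono (by rw [uIcc_of_le hab])).intervalIntegrable)
  rw [← hval]
  rw [← ofReal_integral_eq_lintegral_ofReal hint]
  filter_upwards [ae_restrict_mem measurableSet_Ioo] with y hy
  have hy0 : 0 < y := ha.trans hy.1
  have h1 : 0 < 1 - Real.log y := one_sub_log_pos hy0 (hy.2.le.trans hb)
  positivity

private lemma meas_aux (k : ℕ) :
    Measurable (fun y : ℝ => ENNReal.ofReal ((y * (1 - Real.log y) ^ k)⁻¹)) :=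
  ((measurable_id.mul ((measurable_const.sub Real.measurable_log).pow_const k)).inv).ennreal_ofReal

private lemma lint_one :
    ∫⁻ y in Ioo (0:ℝ) 1, ENNReal.ofReal ((y * (1 - Real.log y) ^ 2)⁻¹) = 1 := by
  have hval : ∀ n : ℕ, ∫⁻ y in Ioo (Real.exp (-(n+1:ℝ))) 1,
      ENNReal.ofReal ((y * (1 - Real.log y) ^ 2)⁻¹) = ENNReal.ofReal (1 - ((n:ℝ)+2)⁻¹) := by
    intro n
    have he : (0:ℝ) < Real.exp (-(n+1:ℝ)) := Real.exp_pos _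
    have he1 : Real.exp (-(n+1:ℝ)) ≤ 1 := Real.exp_le_one_iff.mpr (neg_nonpos.mpr (by positivity))
    rw [lint_Ioo he he1 le_rfl 2 (fun z => (1 - Real.log z)⁻¹) (fun y hy =>
      deriv_aux1 (he.trans_le hy.1) (ne_of_gt (one_sub_log_pos (he.trans_le hy.1) hy.2)))]
    rw [Real.log_one, Real.log_exp]
    norm_num
    ring_nf
  have hmono : Monotone (fun n : ℕ => Ioo (Real.exp (-(n+1:ℝ))) 1) := by
    intro i j hij
    apply Ioo_subset_Ioo_left
    apply Real.exp_le_exp.mpr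
    have : (i:ℝ) ≤ j := Nat.cast_le.mpr hij
    linarith
  have hunion : Ioo (0:ℝ) 1 = ⋃ n : ℕ, Ioo (Real.exp (-(n+1:ℝ))) 1 := by
    ext y
    simp only [mem_iUnion, mem_Ioo]
    constructor
    · rintro ⟨hy0, hy1⟩
      obtain ⟨n, hn⟩ := exists_nat_gt (-Real.log y)
      exact ⟨n, by rw [← Real.exp_log hy0]; exact Real.exp_lt_exp.mpr (by linarith), hy1⟩
    · rintro ⟨n, hn1, hn2⟩
      exact ⟨(Real.exp_pos _).trans hn1, hn2⟩
  calc ∫⁻ y in Ioo (0:ℝ) 1, ENNReal.ofReal ((y * (1 - Real.log y) ^ 2)⁻¹)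
      = (volume.withDensity (fun y => ENNReal.ofReal ((y * (1 - Real.log y) ^ 2)⁻¹)))
          (Ioo (0:ℝ) 1) := (withDensity_apply _ measurableSet_Ioo).symm
    _ = ⨆ n : ℕ, (volume.withDensity (fun y => ENNReal.ofReal ((y * (1 - Real.log y) ^ 2)⁻¹)))
          (Ioo (Real.exp (-(n+1:ℝ))) 1) := by
        rw [hunion]; exact hmono.directed_le.measure_iUnion
    _ = ⨆ n : ℕ, ENNReal.ofReal (1 - ((n:ℝ)+2)⁻¹) := by
        congr 1; funext n
        rw [withDensity_apply _ measurableSet_Ioo, hval n]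
    _ = 1 := by
        have hm : Monotone (fun n : ℕ => ENNReal.ofReal (1 - ((n:ℝ)+2)⁻¹)) := by
          intro i j hij
          apply ENNReal.ofReal_le_ofReal
          have : (i:ℝ) ≤ j := Nat.cast_le.mpr hij
          have h2 : ((j:ℝ)+2)⁻¹ ≤ ((i:ℝ)+2)⁻¹ := by
            apply inv_anti₀ (by positivity) (by linarith)
          linarith
        have ht : Filter.Tendsto (fun n : ℕ => ENNReal.ofReal (1 - ((n:ℝ)+2)⁻¹))
            Filter.atTop (nhds 1) := by
          have h1 : Filter.Tendsto (fun n : ℕ => 1 - ((n:ℝ)+2)⁻¹) Filter.atTop (nhds 1) := by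
            have h2 : Filter.Tendsto (fun n : ℕ => ((n:ℝ)+2)⁻¹) Filter.atTop (nhds 0) :=
              Filter.Tendsto.inv_tendsto_atTop
                (Filter.tendsto_atTop_add_const_right _ 2 tendsto_natCast_atTop_atTop)
            simpa using tendsto_const_nhds.sub h2
          simpa using ENNReal.tendsto_ofReal h1
        exact tendsto_nhds_unique (tendsto_atTop_iSup hm) ht

private lemma lint_two {δ : ℝ} (hδ0 : 0 < δ) (hδ1 : δ < 1) :
    ∫⁻ y in Ioo (0:ℝ) δ, ENNReal.ofReal ((y * (1 - Real.log y) ^ 1)⁻¹) = ⊤ := by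
  set A : ℝ := 1 - Real.log δ with hA
  have hApos : 0 < A := one_sub_log_pos hδ0 hδ1.le
  have hval : ∀ n : ℕ, ENNReal.ofReal (Real.log (A + (n+1)) - Real.log A) ≤
      ∫⁻ y in Ioo (0:ℝ) δ, ENNReal.ofReal ((y * (1 - Real.log y) ^ 1)⁻¹) := by
    intro n
    set ε : ℝ := δ * Real.exp (-(n+1:ℝ)) with hε
    have hε0 : 0 < ε := by positivity
    have hεδ : ε ≤ δ := by
      rw [hε]
      nth_rewrite 2 [← mul_one δ]
      exact mul_le_mul_of_nonneg_left (Real.exp_le_one_iff.mpr (neg_nonpos.mpr (by positivity))) hδ0.le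
    have hlogε : Real.log ε = Real.log δ - (n+1) := by
      rw [hε, Real.log_mul hδ0.ne' (Real.exp_pos _).ne', Real.log_exp]; ring
    have h1 : ∫⁻ y in Ioo ε δ, ENNReal.ofReal ((y * (1 - Real.log y) ^ 1)⁻¹)
        = ENNReal.ofReal (Real.log (A + (n+1)) - Real.log A) := by
      rw [lint_Ioo hε0 hεδ hδ1.le 1 (fun z => -Real.log (1 - Real.log z)) (fun y hy =>
        deriv_aux2 (hε0.trans_le hy.1) (one_sub_log_pos (hε0.trans_le hy.1) (hy.2.trans hδ1.le)))]
      congr 1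
      rw [hlogε, hA]
      ring_nf
    rw [← h1]
    exact lintegral_mono_set (Ioo_subset_Ioo_left hε0.le)
  by_contra h
  have hne : ∫⁻ y in Ioo (0:ℝ) δ, ENNReal.ofReal ((y * (1 - Real.log y) ^ 1)⁻¹) ≠ ⊤ := h
  set I := ∫⁻ y in Ioo (0:ℝ) δ, ENNReal.ofReal ((y * (1 - Real.log y) ^ 1)⁻¹) with hI
  obtain ⟨n, hn⟩ := exists_nat_gt (Real.exp (I.toReal + Real.log A))
  have hb := (ENNReal.ofReal_le_iff_le_toReal hne).mp (hval n)
  have hgt : I.toReal + Real.log A < Real.log (A + (n+1)) :=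
    (Real.lt_log_iff_exp_lt (by positivity)).mpr (lt_of_lt_of_le hn (by linarith))
  linarith

private lemma polar_euclidean (m : ℕ) (hm : 1 ≤ m) (g : ℝ → ℝ≥0∞) (hg : Measurable g) :
    ∫⁻ x : EuclideanSpace ℝ (Fin m), g ‖x‖ =
      (m : ℝ≥0∞) * volume (Metric.ball (0 : EuclideanSpace ℝ (Fin m)) 1) *
        ∫⁻ y in Ioi (0:ℝ), ENNReal.ofReal (y ^ (m - 1)) * g y := by
  haveI : Nonempty (Fin m) := ⟨⟨0, hm⟩⟩
  haveI : Nontrivial (EuclideanSpace ℝ (Fin m)) :=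
    by infer_instance
  simpa [finrank_euclideanSpace_fin] using
    lintegral_fun_norm_addHaar' (volume : Measure (EuclideanSpace ℝ (Fin m))) g hg

private lemma meas_ind (m : ℕ) (c₂ δ : ℝ) (k : ℕ) :
    Measurable (fun y : ℝ => (Ioo (0:ℝ) δ).indicator
      (fun y => ENNReal.ofReal (c₂ * (y ^ m * (1 - Real.log y) ^ k)⁻¹)) y) :=
  Measurable.indicator ((measurable_const.mul ((measurable_id.pow_const m).mul
    ((measurable_const.sub Real.measurable_log).pow_const k)).inv).ennreal_ofReal)
    measurableSet_Ioo

private lemma lint_Ioi_reduce (m : ℕ) (hm : 2 ≤ m) {c₂ : ℝ} (hc₂ : 0 ≤ c₂) {δ : ℝ}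
    (hδ0 : 0 < δ) (hδ1 : δ ≤ 1) (k : ℕ) :
    ∫⁻ y in Ioi (0:ℝ), ENNReal.ofReal (y ^ (m - 1)) *
      (Ioo (0:ℝ) δ).indicator (fun y => ENNReal.ofReal (c₂ * (y ^ m * (1 - Real.log y) ^ k)⁻¹)) y
    = ENNReal.ofReal c₂ * ∫⁻ y in Ioo (0:ℝ) δ, ENNReal.ofReal ((y * (1 - Real.log y) ^ k)⁻¹) := by
  have hptw : ∀ y ∈ Ioi (0:ℝ), ENNReal.ofReal (y ^ (m - 1)) *
      (Ioo (0:ℝ) δ).indicator (fun y => ENNReal.ofReal (c₂ * (y ^ m * (1 - Real.log y) ^ k)⁻¹)) y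
      = (Ioo (0:ℝ) δ).indicator
          (fun y => ENNReal.ofReal c₂ * ENNReal.ofReal ((y * (1 - Real.log y) ^ k)⁻¹)) y := by
    intro y hy
    have hy0 : 0 < y := hy
    by_cases hmem : y ∈ Ioo (0:ℝ) δ
    · rw [indicator_of_mem hmem, indicator_of_mem hmem, ← ENNReal.ofReal_mul (by positivity),
        ← ENNReal.ofReal_mul hc₂]
      congr 1
      have ht : 0 < 1 - Real.log y := one_sub_log_pos hy0 (hmem.2.le.trans hδ1)
      have hym : y ^ m = y * y ^ (m - 1) := by
        rw [← pow_succ']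
        congr 1
        omega
      rw [hym]
      have h1 : y ^ (m-1) ≠ 0 := by positivity
      have h2 : (1 - Real.log y) ^ k ≠ 0 := by positivity
      field_simp
    · rw [indicator_of_notMem hmem, indicator_of_notMem hmem, mul_zero]
  rw [setLIntegral_congr_fun measurableSet_Ioi hptw,
    lintegral_indicator, Measure.restrict_restrict measurableSet_Ioo,
    show Ioo (0:ℝ) δ ∩ Ioi 0 = Ioo 0 δ from
      inter_eq_self_of_subset_left (fun y (hy : y ∈ Ioo (0:ℝ) δ) => hy.1),
    lintegral_const_mul _ (meas_aux k)]
  exact measurableSet_Ioo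

private lemma neg_mul_log_le {u : ℝ} (hu : 0 ≤ u) : -(u * Real.log u) ≤ Real.exp (-1) := by
  rcases eq_or_lt_of_le hu with h | h
  · simp [← h]
    positivity
  · have h1 : -Real.log u ≤ Real.exp (-1 - Real.log u) := by
      have := Real.add_one_le_exp (-1 - Real.log u)
      linarith
    have h2 : -(u * Real.log u) = u * (-Real.log u) := by ring
    rw [h2]
    calc u * (-Real.log u) ≤ u * Real.exp (-1 - Real.log u) :=
          mul_le_mul_of_nonneg_left h1 hu
      _ = Real.exp (-1) := by
          rw [sub_eq_add_neg, Real.exp_add, Real.exp_neg, Real.exp_neg, Real.exp_log h]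
          field_simp

theorem density_infinite_entropy_multivariate (m : ℕ) (hm : 2 ≤ m)
    (c₂ : ℝ) (hc₂ : c₂ = Real.Gamma (m / 2) / (2 * Real.pi ^ ((m : ℝ) / 2)))
    (f : EuclideanSpace ℝ (Fin m) → ℝ)
    (hf : ∀ x, f x = if ‖x‖ < 1 then c₂ * (‖x‖ ^ m * (1 - Real.log ‖x‖) ^ 2)⁻¹ else 0) :
    (∫ x, f x = 1) ∧
    (∫⁻ x, ENNReal.ofReal (f x * Real.log (f x)) = ⊤) ∧
    (∫⁻ x, ENNReal.ofReal (-(f x * Real.log (f x))) < ⊤) := by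
  have hmpos : 0 < m := by omega
  have hm0 : (0:ℝ) < m := by exact_mod_cast hmpos
  have hm2 : (2:ℝ) ≤ m := by exact_mod_cast hm
  have h2pos : (0:ℝ) < (m:ℝ)/2 := by linarith
  have hΓpos : 0 < Real.Gamma ((m:ℝ)/2) := Real.Gamma_pos_of_pos h2pos
  have hc₂pos : 0 < c₂ := by
    rw [hc₂]
    have hπ : (0:ℝ) < Real.pi ^ ((m:ℝ)/2) := Real.rpow_pos_of_pos Real.pi_pos _
    positivity
  have hfm : Measurable f := by
    have hfeq : f = (fun y : ℝ => if y < 1 then c₂ * (y ^ m * (1 - Real.log y) ^ 2)⁻¹ else 0)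
        ∘ (fun x : EuclideanSpace ℝ (Fin m) => ‖x‖) := funext fun x => hf x
    rw [hfeq]
    exact (Measurable.ite measurableSet_Iio
      (measurable_const.mul ((measurable_id.pow_const m).mul
        ((measurable_const.sub Real.measurable_log).pow_const 2)).inv) measurable_const).comp
      measurable_norm
  have h0f : ∀ x, 0 ≤ f x := by
    intro x
    rw [hf x]
    by_cases h1 : ‖x‖ < 1
    · rw [if_pos h1]
      exact mul_nonneg hc₂pos.le (inv_nonneg.mpr (by positivity))
    · rw [if_neg h1]
  set vol := volume (Metric.ball (0 : EuclideanSpace ℝ (Fin m)) 1) with hvol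
  have hvolval : vol = ENNReal.ofReal (Real.sqrt Real.pi ^ m / Real.Gamma ((m:ℝ)/2 + 1)) := by
    haveI : Nonempty (Fin m) := ⟨⟨0, hmpos⟩⟩
    rw [hvol, EuclideanSpace.volume_ball]
    simp [Fintype.card_fin]
  have hnorm : (m : ℝ≥0∞) * vol * ENNReal.ofReal c₂ = 1 := by
    have hΓ1 : 0 < Real.Gamma ((m:ℝ)/2 + 1) := Real.Gamma_pos_of_pos (by linarith)
    rw [hvolval, ← ENNReal.ofReal_natCast m,
      ← ENNReal.ofReal_mul (by positivity),
      ← ENNReal.ofReal_mul (mul_nonneg (Nat.cast_nonneg m)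
        (div_nonneg (by positivity) hΓ1.le))]
    rw [show ((m:ℝ) * (Real.sqrt Real.pi ^ m / Real.Gamma ((m:ℝ)/2 + 1)) * c₂) = 1 from ?_,
      ENNReal.ofReal_one]
    have hΓadd : Real.Gamma ((m:ℝ)/2 + 1) = ((m:ℝ)/2) * Real.Gamma ((m:ℝ)/2) :=
      Real.Gamma_add_one h2pos.ne'
    have hsq : Real.sqrt Real.pi ^ m = Real.pi ^ ((m:ℝ)/2) := by
      rw [Real.sqrt_eq_rpow, ← Real.rpow_natCast (Real.pi ^ ((1:ℝ)/2)) m,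
        ← Real.rpow_mul Real.pi_pos.le]
      congr 1
      ring
    have hπ : (0:ℝ) < Real.pi ^ ((m:ℝ)/2) := Real.rpow_pos_of_pos Real.pi_pos _
    rw [hc₂, hΓadd, hsq]
    field_simp
  have hlof : ∫⁻ x, ENNReal.ofReal (f x) = 1 := by
    have hcong : ∀ x : EuclideanSpace ℝ (Fin m), ENNReal.ofReal (f x) =
        (Ioo (0:ℝ) 1).indicator
          (fun y => ENNReal.ofReal (c₂ * (y ^ m * (1 - Real.log y) ^ 2)⁻¹)) ‖x‖ := by
      intro x
      rw [hf x]
      by_cases h1 : ‖x‖ < 1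
      · rw [if_pos h1]
        rcases eq_or_lt_of_le (norm_nonneg x) with h0 | h0
        · rw [indicator_of_notMem (fun hmem => absurd hmem.1 (by rw [← h0]; exact lt_irrefl 0)),
            ← h0]
          simp [zero_pow (by omega : m ≠ 0)]
        · rw [indicator_of_mem (mem_Ioo.mpr ⟨h0, h1⟩)]
      · rw [if_neg h1, indicator_of_notMem (fun hmem => h1 hmem.2)]
        simp
    calc ∫⁻ x, ENNReal.ofReal (f x)
        = ∫⁻ x : EuclideanSpace ℝ (Fin m), (Ioo (0:ℝ) 1).indicator
            (fun y => ENNReal.ofReal (c₂ * (y ^ m * (1 - Real.log y) ^ 2)⁻¹)) ‖x‖ :=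
          lintegral_congr hcong
      _ = (m : ℝ≥0∞) * vol * ∫⁻ y in Ioi (0:ℝ), ENNReal.ofReal (y ^ (m-1)) *
            (Ioo (0:ℝ) 1).indicator
              (fun y => ENNReal.ofReal (c₂ * (y ^ m * (1 - Real.log y) ^ 2)⁻¹)) y :=
          polar_euclidean m (by omega) _ (meas_ind m c₂ 1 2)
      _ = (m : ℝ≥0∞) * vol * (ENNReal.ofReal c₂ *
            ∫⁻ y in Ioo (0:ℝ) 1, ENNReal.ofReal ((y * (1 - Real.log y) ^ 2)⁻¹)) := by
          rw [lint_Ioi_reduce m hm hc₂pos.le one_pos le_rfl 2]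
      _ = (m : ℝ≥0∞) * vol * (ENNReal.ofReal c₂ * 1) := by rw [lint_one]
      _ = 1 := by rw [mul_one]; exact hnorm
  refine ⟨?_, ?_, ?_⟩
  · rw [integral_eq_lintegral_of_nonneg_ae (Filter.Eventually.of_forall h0f)
      hfm.aestronglyMeasurable, hlof]
    simp
  · set T : ℝ := max 2 ((2 + Real.sqrt (max 0 ((m:ℝ) - Real.log c₂))) ^ 2) with hT
    have hT2 : (2:ℝ) ≤ T := le_max_left _ _
    set δ : ℝ := Real.exp (1 - T) with hδ
    have hδ0 : 0 < δ := Real.exp_pos _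
    have hδ1 : δ < 1 := by
      rw [hδ, Real.exp_lt_one_iff]
      linarith
    have hkey : ∀ x : EuclideanSpace ℝ (Fin m), ‖x‖ ∈ Ioo (0:ℝ) δ →
        c₂ * (‖x‖ ^ m * (1 - Real.log ‖x‖) ^ 1)⁻¹ ≤ f x * Real.log (f x) := by
      intro x hmem
      obtain ⟨hy0, hyδ⟩ := hmem
      set y := ‖x‖ with hy
      have hy1 : y < 1 := hyδ.trans hδ1
      set t : ℝ := 1 - Real.log y with htdef
      have hlogy : Real.log y < 1 - T := by
        have h := Real.log_lt_log hy0 hyδ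
        rwa [hδ, Real.log_exp] at h
      have htT : T ≤ t := by rw [htdef]; linarith
      have ht2 : (2:ℝ) ≤ t := le_trans hT2 htT
      have ht0 : (0:ℝ) < t := by linarith
      have hym : (0:ℝ) < y ^ m := pow_pos hy0 m
      have hfx : f x = c₂ * (y ^ m * t ^ 2)⁻¹ := by rw [hf x, if_pos hy1]
      have hfpos : 0 < f x := by
        rw [hfx]; exact mul_pos hc₂pos (inv_pos.mpr (mul_pos hym (pow_pos ht0 2)))
      have hlogf : Real.log (f x) = Real.log c₂ - ((m:ℝ) * Real.log y + 2 * Real.log t) := by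
        rw [hfx, Real.log_mul hc₂pos.ne' (inv_pos.mpr (mul_pos hym (pow_pos ht0 2))).ne',
          Real.log_inv, Real.log_mul hym.ne' (pow_pos ht0 2).ne', Real.log_pow, Real.log_pow]
        push_cast
        ring
      have hst : Real.sqrt t ^ 2 = t := Real.sq_sqrt ht0.le
      have hs1 : Real.log t ≤ 2 * (Real.sqrt t - 1) := by
        have h := Real.log_le_sub_one_of_pos (Real.sqrt_pos.mpr ht0)
        have h2 : Real.log (Real.sqrt t) = Real.log t / 2 := Real.log_sqrt ht0.le
        linarith
      have hTs : 2 + Real.sqrt (max 0 ((m:ℝ) - Real.log c₂)) ≤ Real.sqrt t := by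
        have h1 : ((2 + Real.sqrt (max 0 ((m:ℝ) - Real.log c₂))) ^ 2 : ℝ) ≤ t :=
          le_trans (le_max_right _ _) htT
        calc 2 + Real.sqrt (max 0 ((m:ℝ) - Real.log c₂))
            = Real.sqrt ((2 + Real.sqrt (max 0 ((m:ℝ) - Real.log c₂))) ^ 2) :=
              (Real.sqrt_sq (by positivity)).symm
          _ ≤ Real.sqrt t := Real.sqrt_le_sqrt h1
      have hsqmax : (m:ℝ) - Real.log c₂ ≤ (Real.sqrt t - 2) ^ 2 := by
        have h0 : (0:ℝ) ≤ Real.sqrt (max 0 ((m:ℝ) - Real.log c₂)) := Real.sqrt_nonneg _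
        have h2' : Real.sqrt (max 0 ((m:ℝ) - Real.log c₂)) ≤ Real.sqrt t - 2 := by linarith
        calc (m:ℝ) - Real.log c₂ ≤ max 0 ((m:ℝ) - Real.log c₂) := le_max_right _ _
          _ = Real.sqrt (max 0 ((m:ℝ) - Real.log c₂)) ^ 2 :=
              (Real.sq_sqrt (le_max_left _ _)).symm
          _ ≤ (Real.sqrt t - 2) ^ 2 := pow_le_pow_left₀ h0 h2' 2
      have hkey2 : t ≤ Real.log (f x) := by
        rw [hlogf]
        have hL : Real.log y = 1 - t := by rw [htdef]; ring
        rw [hL]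
        nlinarith [mul_nonneg (sub_nonneg.mpr hm2) (by linarith : (0:ℝ) ≤ t - 2), hst, hs1,
          hsqmax, Real.sqrt_nonneg t]
      have hfinal : c₂ * (y ^ m * t ^ 1)⁻¹ = f x * t := by
        rw [hfx]
        field_simp
      calc c₂ * (y ^ m * t ^ 1)⁻¹ = f x * t := hfinal
        _ ≤ f x * Real.log (f x) := mul_le_mul_of_nonneg_left hkey2 hfpos.le
    have hlow : ∀ x : EuclideanSpace ℝ (Fin m),
        (Ioo (0:ℝ) δ).indicator
          (fun y => ENNReal.ofReal (c₂ * (y ^ m * (1 - Real.log y) ^ 1)⁻¹)) ‖x‖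
          ≤ ENNReal.ofReal (f x * Real.log (f x)) := by
      intro x
      by_cases hmem : ‖x‖ ∈ Ioo (0:ℝ) δ
      · rw [indicator_of_mem hmem]
        exact ENNReal.ofReal_le_ofReal (hkey x hmem)
      · rw [indicator_of_notMem hmem]
        exact zero_le
    have htop : ∫⁻ x : EuclideanSpace ℝ (Fin m),
        (Ioo (0:ℝ) δ).indicator
          (fun y => ENNReal.ofReal (c₂ * (y ^ m * (1 - Real.log y) ^ 1)⁻¹)) ‖x‖ = ⊤ := by
      rw [polar_euclidean m (by omega) _ (meas_ind m c₂ δ 1),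
        lint_Ioi_reduce m hm hc₂pos.le hδ0 hδ1.le 1, lint_two hδ0 hδ1,
        ENNReal.mul_top (ENNReal.ofReal_pos.mpr hc₂pos).ne',
        ENNReal.mul_top (mul_ne_zero (Nat.cast_ne_zero.mpr (by omega))
          (Metric.measure_ball_pos volume (0 : EuclideanSpace ℝ (Fin m)) one_pos).ne')]
    exact top_le_iff.mp (htop ▸ lintegral_mono hlow)
  · have hb : ∀ x : EuclideanSpace ℝ (Fin m), ENNReal.ofReal (-(f x * Real.log (f x))) ≤
        (Metric.ball (0 : EuclideanSpace ℝ (Fin m)) 1).indicator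
          (fun _ => ENNReal.ofReal (Real.exp (-1))) x := by
      intro x
      by_cases hx : x ∈ Metric.ball (0 : EuclideanSpace ℝ (Fin m)) 1
      · rw [indicator_of_mem hx]
        exact ENNReal.ofReal_le_ofReal (neg_mul_log_le (h0f x))
      · rw [indicator_of_notMem hx]
        have hfx : f x = 0 := by
          rw [hf x, if_neg (fun h => hx (mem_ball_zero_iff.mpr h))]
        simp [hfx]
    calc ∫⁻ x, ENNReal.ofReal (-(f x * Real.log (f x)))
        ≤ ∫⁻ x, (Metric.ball (0 : EuclideanSpace ℝ (Fin m)) 1).indicator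
            (fun _ => ENNReal.ofReal (Real.exp (-1))) x := lintegral_mono hb
      _ = ENNReal.ofReal (Real.exp (-1)) * vol := by
          rw [lintegral_indicator measurableSet_ball, setLIntegral_const]
      _ < ⊤ := ENNReal.mul_lt_top ENNReal.ofReal_lt_top measure_ball_lt_top
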